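/- Quadruple lightcone intersections in ℝ^{1,1}-style coordinates: in 2-dimensional space with lightcone coordinates λ = y¹+y⁰, λ̃ = y¹-y⁰ so that (y_i - y_j)² = (λ_i - λ_j)(λ̃_i - λ̃_j), given two points x_a, x_b with (x_a - x_b)² > 0, λ_a < λ_b, and λ̃_a < λ̃_b, the region Δ = {y : (y-x_a)² ≥ 0, (y-x_b)² ≥ 0, λ_a ≤ λ ≤ λ_b, λ̃_a ≤ λ̃ ≤ λ̃_b} is exactly the product of intervals [λ_a,λ_b] × [λ̃_a,λ̃_b], and its canonical form factorizes: d log((λ-λ_a)/(λ-λ_b)) ∧ d log((λ̃-λ̃_a)/(λ̃-λ̃_b)) = X_{ab}·d²y / ((y-x_a)²(y-x_b)²), where X_{ab} = (x_a-x_b)². -/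

import Mathlib

/-- The 2d toy model: in lightcone coordinates λ = y¹+y⁰, λ̃ = y¹-y⁰ the quadratic form
factorizes, the region Δ is the product of intervals [λ_a,λ_b] × [λ̃_a,λ̃_b], and its
canonical form factorizes as d log((λ-λ_a)/(λ-λ_b)) ∧ d log((λ̃-λ̃_a)/(λ̃-λ̃_b))
= X_{ab} dλ∧dλ̃ /((y-x_a)²(y-x_b)²). -/
theorem stmt_19
    (N : (Fin 2 → ℝ) → ℝ) (hN : ∀ y, N y = -(y 0) ^ 2 + (y 1) ^ 2)
    (lam lamt : (Fin 2 → ℝ) → ℝ)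
    (hlam : ∀ y, lam y = y 1 + y 0) (hlamt : ∀ y, lamt y = y 1 - y 0)
    (xa xb : Fin 2 → ℝ)
    (hsep : 0 < N (xa - xb))
    (h1 : lam xa < lam xb) (h2 : lamt xa < lamt xb) :
    (∀ u v : Fin 2 → ℝ, N (u - v) = (lam u - lam v) * (lamt u - lamt v)) ∧
    ({y : Fin 2 → ℝ | 0 ≤ N (y - xa) ∧ 0 ≤ N (y - xb) ∧
        lam xa ≤ lam y ∧ lam y ≤ lam xb ∧ lamt xa ≤ lamt y ∧ lamt y ≤ lamt xb} =
      {y : Fin 2 → ℝ | lam y ∈ Set.Icc (lam xa) (lam xb) ∧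
        lamt y ∈ Set.Icc (lamt xa) (lamt xb)}) ∧
    (∀ y : Fin 2 → ℝ, lam y ≠ lam xa → lam y ≠ lam xb →
      lamt y ≠ lamt xa → lamt y ≠ lamt xb →
      (1 / (lam y - lam xa) - 1 / (lam y - lam xb)) *
        (1 / (lamt y - lamt xa) - 1 / (lamt y - lamt xb)) =
      N (xa - xb) / (N (y - xa) * N (y - xb))) := by
  have key : ∀ u v : Fin 2 → ℝ, N (u - v) = (lam u - lam v) * (lamt u - lamt v) := by
    intro u v
    simp only [hN, hlam, hlamt, Pi.sub_apply]
    ring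
  refine ⟨key, ?_, ?_⟩
  · ext y
    simp only [Set.mem_setOf_eq, Set.mem_Icc]
    constructor
    · rintro ⟨_, _, h3, h4, h5, h6⟩; exact ⟨⟨h3, h4⟩, h5, h6⟩
    · rintro ⟨⟨h3, h4⟩, h5, h6⟩
      refine ⟨?_, ?_, h3, h4, h5, h6⟩
      · rw [key]; exact mul_nonneg (by linarith) (by linarith)
      · rw [key]; nlinarith
  · intro y hya hyb hta htb
    rw [key, key, key]
    have ha : lam y - lam xa ≠ 0 := sub_ne_zero.mpr hya
    have hb : lam y - lam xb ≠ 0 := sub_ne_zero.mpr hyb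
    have hc : lamt y - lamt xa ≠ 0 := sub_ne_zero.mpr hta
    have hd : lamt y - lamt xb ≠ 0 := sub_ne_zero.mpr htb
    field_simp
    ring_nf
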